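/- Let n ≥ 3, let I ⊆ {1,…,N} with |I| = n−1, let j ∉ I, and let x₁,…,x_N ∈ ℝ². Set x̄^I = (n−1)^{-1}∑_{i∈I} x_i and x̄^{I∪{j}} = n^{-1}∑_{i∈I∪{j}} x_i. Then (2n−3) min_{k∈I} |x_k − x_j|² ≥ n ∑_{i∈I∪{j}} |x_i − x̄^{I∪{j}}|² − 3(n−1) ∑_{i∈I} |x_i − x̄^I|². -/

import Mathlib

set_option maxHeartbeats 800000
open Real
open scoped RealInnerProductSpace

lemma spread_aux {ι : Type*} {E : Type*} [NormedAddCommGroup E] [InnerProductSpace ℝ E]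
    (s : Finset ι) (x : ι → E) (p : E) {c : ℝ} (hc : (s.card : ℝ) = c) (hc0 : c ≠ 0) :
    ∑ i ∈ s, ‖x i - p‖ ^ 2
      = (∑ i ∈ s, ‖x i - c⁻¹ • ∑ m ∈ s, x m‖ ^ 2)
        + c * ‖c⁻¹ • (∑ m ∈ s, x m) - p‖ ^ 2 := by
  set b := c⁻¹ • ∑ m ∈ s, x m with hb
  have hsum : ∑ i ∈ s, (x i - b) = 0 := by
    rw [Finset.sum_sub_distrib, Finset.sum_const]
    rw [← Nat.cast_smul_eq_nsmul ℝ, hc, hb, smul_smul, mul_inv_cancel₀ hc0, one_smul, sub_self]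
  have key : ∀ i ∈ s, ‖x i - p‖ ^ 2
      = ‖x i - b‖ ^ 2 + (2 * ⟪x i - b, b - p⟫ + ‖b - p‖ ^ 2) := by
    intro i _
    have h1 : x i - p = (x i - b) + (b - p) := by abel
    rw [h1, ← real_inner_self_eq_norm_sq, ← real_inner_self_eq_norm_sq,
      ← real_inner_self_eq_norm_sq, real_inner_add_add_self]
    ring
  rw [Finset.sum_congr rfl key, Finset.sum_add_distrib]
  congr 1
  rw [Finset.sum_add_distrib, ← Finset.mul_sum, ← sum_inner, hsum, inner_zero_left,
    mul_zero, zero_add, Finset.sum_const, nsmul_eq_mul, hc]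

theorem stmt8 (N n : ℕ) (hn : 3 ≤ n) (I : Finset (Fin N)) (hI : I.card = n - 1)
    (j : Fin N) (hj : j ∉ I) (x : Fin N → EuclideanSpace ℝ (Fin 2)) :
    (n : ℝ) * ∑ i ∈ insert j I, ‖x i - (n : ℝ)⁻¹ • ∑ m ∈ insert j I, x m‖ ^ 2
        - 3 * ((n : ℝ) - 1) * ∑ i ∈ I, ‖x i - ((n : ℝ) - 1)⁻¹ • ∑ m ∈ I, x m‖ ^ 2
      ≤ (2 * (n : ℝ) - 3) *
          I.inf' (Finset.card_pos.mp (by omega)) (fun k => ‖x k - x j‖ ^ 2) := by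
  have hn3 : (3 : ℝ) ≤ (n : ℝ) := by exact_mod_cast hn
  have hcardI : ((I.card : ℝ)) = (n : ℝ) - 1 := by
    rw [hI]; push_cast [Nat.cast_sub (by omega : 1 ≤ n)]; ring
  have hcard1 : ((n : ℝ) - 1) ≠ 0 := by linarith
  have hnne : (n : ℝ) ≠ 0 := by linarith
  have hcardJ : (((insert j I).card : ℝ)) = (n : ℝ) := by
    rw [Finset.card_insert_of_notMem hj, hI]
    push_cast [Nat.cast_sub (by omega : 1 ≤ n)]; ring
  set b : EuclideanSpace ℝ (Fin 2) := ((n : ℝ) - 1)⁻¹ • ∑ m ∈ I, x m with hb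
  set S : ℝ := ∑ i ∈ I, ‖x i - b‖ ^ 2 with hS
  -- barycenter shift identity for insert j I with p = b
  have h1 : ∑ i ∈ insert j I, ‖x i - b‖ ^ 2
      = (∑ i ∈ insert j I, ‖x i - (n : ℝ)⁻¹ • ∑ m ∈ insert j I, x m‖ ^ 2)
        + (n : ℝ) * ‖(n : ℝ)⁻¹ • (∑ m ∈ insert j I, x m) - b‖ ^ 2 :=
    spread_aux _ x b hcardJ hnne
  have hsumI : ∑ m ∈ I, x m = ((n : ℝ) - 1) • b := by
    rw [hb, smul_smul, mul_inv_cancel₀ hcard1, one_smul]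
  have hcb : (n : ℝ)⁻¹ • (∑ m ∈ insert j I, x m) - b = (n : ℝ)⁻¹ • (x j - b) := by
    rw [Finset.sum_insert hj, hsumI]
    rw [smul_sub, smul_add]
    rw [smul_smul]
    have : (n:ℝ)⁻¹ * ((n:ℝ) - 1) = 1 - (n:ℝ)⁻¹ := by field_simp
    rw [this, sub_smul, one_smul]
    abel
  have hnormcb : (n : ℝ) * ‖(n : ℝ)⁻¹ • (∑ m ∈ insert j I, x m) - b‖ ^ 2
      = (n : ℝ)⁻¹ * ‖x j - b‖ ^ 2 := by
    rw [hcb, norm_smul]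
    rw [Real.norm_eq_abs, abs_of_pos (by positivity)]
    rw [mul_pow]
    field_simp
  have hsumJb : ∑ i ∈ insert j I, ‖x i - b‖ ^ 2 = ‖x j - b‖ ^ 2 + S := by
    rw [Finset.sum_insert hj, hS]
  -- identity: sum of squared dists to x j over I
  have h2 : ∑ i ∈ I, ‖x i - x j‖ ^ 2 = S + ((n : ℝ) - 1) * ‖b - x j‖ ^ 2 := by
    have := spread_aux I x (x j) hcardI hcard1
    rw [this, ← hb, ← hS]
  -- min attained
  obtain ⟨k0, hk0, hmin⟩ := Finset.exists_mem_eq_inf' (Finset.card_pos.mp (by omega : 0 < I.card))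
    (fun k => ‖x k - x j‖ ^ 2)
  set m : ℝ := I.inf' (Finset.card_pos.mp (by omega)) (fun k => ‖x k - x j‖ ^ 2) with hm
  have hmk0 : m = ‖x k0 - x j‖ ^ 2 := hmin
  -- identity: sum of squared dists to x k0 over I
  have h3 : ∑ i ∈ I, ‖x i - x k0‖ ^ 2 = S + ((n : ℝ) - 1) * ‖b - x k0‖ ^ 2 := by
    have := spread_aux I x (x k0) hcardI hcard1
    rw [this, ← hb, ← hS]
  -- Cauchy-Schwarz: ‖x k0 - b‖^2 ≤ (n-2) * ∑ over erase
  have hsum0 : ∑ i ∈ I, (x i - b) = 0 := by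
    rw [Finset.sum_sub_distrib, Finset.sum_const, ← Nat.cast_smul_eq_nsmul ℝ, hcardI,
      hsumI, sub_self]
  have hk0eq : x k0 - b = -∑ i ∈ I.erase k0, (x i - b) := by
    have := Finset.add_sum_erase I (fun i => x i - b) hk0
    rw [hsum0] at this
    simpa using eq_neg_of_add_eq_zero_left this
  have hCS : ‖x k0 - b‖ ^ 2 ≤ ((n : ℝ) - 2) * ∑ i ∈ I.erase k0, ‖x i - b‖ ^ 2 := by
    have hcarde : (((I.erase k0).card : ℝ)) = (n : ℝ) - 2 := by
      rw [Finset.card_erase_of_mem hk0, hI]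
      have : n - 1 - 1 = n - 2 := by omega
      rw [this, Nat.cast_sub (by omega : 2 ≤ n)]; push_cast; ring
    calc ‖x k0 - b‖ ^ 2 = ‖∑ i ∈ I.erase k0, (x i - b)‖ ^ 2 := by rw [hk0eq, norm_neg]
      _ ≤ (∑ i ∈ I.erase k0, ‖x i - b‖) ^ 2 := by
          have h := norm_sum_le (I.erase k0) (fun i => x i - b)
          have h0 : (0:ℝ) ≤ ‖∑ i ∈ I.erase k0, (x i - b)‖ := norm_nonneg _
          nlinarith
      _ = (∑ i ∈ I.erase k0, 1 * ‖x i - b‖) ^ 2 := by simp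
      _ ≤ (∑ i ∈ I.erase k0, (1:ℝ) ^ 2) * ∑ i ∈ I.erase k0, ‖x i - b‖ ^ 2 :=
          Finset.sum_mul_sq_le_sq_mul_sq _ _ _
      _ = ((n : ℝ) - 2) * ∑ i ∈ I.erase k0, ‖x i - b‖ ^ 2 := by
          rw [Finset.sum_const, one_pow, nsmul_eq_mul, mul_one, hcarde]
  have hSerase : ∑ i ∈ I.erase k0, ‖x i - b‖ ^ 2 = S - ‖x k0 - b‖ ^ 2 := by
    rw [hS, ← Finset.add_sum_erase I (fun i => ‖x i - b‖ ^ 2) hk0]; ring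
  -- (n-1)‖x k0 - b‖^2 ≤ (n-2) S
  have hk0S : ((n : ℝ) - 1) * ‖x k0 - b‖ ^ 2 ≤ ((n : ℝ) - 2) * S := by
    rw [hSerase] at hCS; nlinarith [sq_nonneg ‖x k0 - b‖]
  -- per-point bound on erase
  have hpt : ∀ i ∈ I.erase k0, ‖x i - x j‖ ^ 2 ≤ 2 * ‖x i - x k0‖ ^ 2 + 2 * m := by
    intro i _
    have htri : ‖x i - x j‖ ≤ ‖x i - x k0‖ + ‖x k0 - x j‖ := norm_sub_le_norm_sub_add_norm_sub _ _ _
    have h0 : (0:ℝ) ≤ ‖x i - x j‖ := norm_nonneg _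
    rw [hmk0]
    set a1 := ‖x i - x j‖
    set a2 := ‖x i - x k0‖
    set a3 := ‖x k0 - x j‖
    nlinarith [sq_nonneg (a2 - a3), sq_nonneg (a2 + a3)]
  have hsumd : ∑ i ∈ I, ‖x i - x j‖ ^ 2
      ≤ m + (2 * ∑ i ∈ I, ‖x i - x k0‖ ^ 2 + 2 * ((n : ℝ) - 2) * m) := by
    rw [← Finset.add_sum_erase I (fun i => ‖x i - x j‖ ^ 2) hk0, ← hmk0]
    have hb1 : ∑ i ∈ I.erase k0, ‖x i - x j‖ ^ 2
        ≤ ∑ i ∈ I.erase k0, (2 * ‖x i - x k0‖ ^ 2 + 2 * m) := Finset.sum_le_sum hpt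
    have hb2 : ∑ i ∈ I.erase k0, (2 * ‖x i - x k0‖ ^ 2 + 2 * m)
        = 2 * ∑ i ∈ I.erase k0, ‖x i - x k0‖ ^ 2 + ((I.erase k0).card : ℝ) * (2 * m) := by
      rw [Finset.sum_add_distrib, ← Finset.mul_sum, Finset.sum_const, nsmul_eq_mul]
    have hcarde : (((I.erase k0).card : ℝ)) = (n : ℝ) - 2 := by
      rw [Finset.card_erase_of_mem hk0, hI]
      have : n - 1 - 1 = n - 2 := by omega
      rw [this, Nat.cast_sub (by omega : 2 ≤ n)]; push_cast; ring
    have hsub : ∑ i ∈ I.erase k0, ‖x i - x k0‖ ^ 2 ≤ ∑ i ∈ I, ‖x i - x k0‖ ^ 2 := by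
      rw [← Finset.add_sum_erase I (fun i => ‖x i - x k0‖ ^ 2) hk0]
      simp
    rw [hcarde] at hb2
    linarith
  have hmnn : 0 ≤ m := by rw [hmk0]; positivity
  -- assemble
  have hxjb : ((n : ℝ) - 1) * ‖b - x j‖ ^ 2 = ∑ i ∈ I, ‖x i - x j‖ ^ 2 - S := by linarith [h2]
  have hxjb' : ‖x j - b‖ = ‖b - x j‖ := norm_sub_rev _ _
  have hTle : ∑ i ∈ I, ‖x i - x k0‖ ^ 2 ≤ ((n : ℝ) - 1) * S := by
    have hbk : ‖b - x k0‖ = ‖x k0 - b‖ := norm_sub_rev _ _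
    rw [h3, hbk]
    nlinarith [sq_nonneg ‖x k0 - b‖]
  have hkey : (n : ℝ) * ∑ i ∈ insert j I, ‖x i - (n : ℝ)⁻¹ • ∑ m ∈ insert j I, x m‖ ^ 2
      = (n : ℝ) * S + ((n : ℝ) - 1) * ‖x j - b‖ ^ 2 := by
    have e1 : ∑ i ∈ insert j I, ‖x i - (n : ℝ)⁻¹ • ∑ m ∈ insert j I, x m‖ ^ 2
        = (‖x j - b‖ ^ 2 + S) - (n : ℝ)⁻¹ * ‖x j - b‖ ^ 2 := by
      rw [← hsumJb, h1, hnormcb]; ring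
    rw [e1]
    field_simp
    ring
  rw [hkey, hxjb', hxjb]
  linarith [hsumd, hTle]
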